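/- arXiv:2410.22701 — 2 statements merged into one kernel-verified Lean document; each statement's English description precedes it below -/
import Mathlib

section
/- Let (ψ_n) be a sequence of Carathéodory functions and let ψ be a Carathéodory function. Then (ψ_n) converges to ψ uniformly on compact subsets of 𝔻 if and only if for every ℓ ∈ ℕ the Taylor coefficients satisfy a_{ψ_n}(ℓ) → a_ψ(ℓ) as n → ∞. -/
open MeasureTheory Metric Complex Filter Topology
open scoped ENNReal NNReal

noncomputable section

instance : MeasurableSpace Circle := borel Circle
instance : BorelSpace Circle := ⟨rfl⟩

/-- The normalized Haar (Lebesgue) probability measure on the circle. -/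
def haarCircle : Measure Circle :=
  Measure.haarMeasure (⊤ : TopologicalSpace.PositiveCompacts Circle)

/-- A measure on the circle is `×n`-invariant. -/
def MulInvariant (n : ℕ) (μ : Measure Circle) : Prop :=
  ∀ f : C(Circle, ℂ), ∫ ω, f (ω ^ n) ∂μ = ∫ ω, f ω ∂μ

/-- `×(2,3)`-invariant Borel probability measures. -/
def Inv23 (μ : Measure Circle) : Prop :=
  IsProbabilityMeasure μ ∧ MulInvariant 2 μ ∧ MulInvariant 3 μ

/-- Ergodicity of a `×(2,3)`-invariant probability measure. -/
def Ergodic23 (μ : Measure Circle) : Prop :=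
  Inv23 μ ∧ ∀ (κ ν : Measure Circle) (t : ℝ≥0∞), Inv23 κ → Inv23 ν →
    0 < t → t < 1 → μ = t • κ + (1 - t) • ν → κ = μ ∧ ν = μ

/-- The support of a measure: the minimal closed set of full measure. -/
def msupport (μ : Measure Circle) : Set Circle :=
  ⋂₀ {s : Set Circle | IsClosed s ∧ μ s = 1}

/-- Vague convergence of measures on the circle. -/
def VagueTendsto (μs : ℕ → Measure Circle) (μ : Measure Circle) : Prop :=
  ∀ f : C(Circle, ℂ),
    Tendsto (fun n => ∫ ω, f ω ∂(μs n)) atTop (𝓝 (∫ ω, f ω ∂μ))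

/-- The `ℓ`-th Fourier coefficient of a measure on the circle. -/
def fourierCoef (μ : Measure Circle) (ℓ : ℤ) : ℂ :=
  ∫ ω, (ω : ℂ) ^ (-ℓ) ∂μ

/-- The Herglotz transform of a measure on the circle. -/
def herglotz (μ : Measure Circle) (z : ℂ) : ℂ :=
  ∫ ω, ((ω : ℂ) + z) / ((ω : ℂ) - z) ∂μ

/-- Carathéodory function: holomorphic on the unit disk, positive real part, `ψ 0 = 1`. -/
def IsCara (ψ : ℂ → ℂ) : Prop :=
  DifferentiableOn ℂ ψ (ball (0 : ℂ) 1) ∧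
    (∀ z ∈ ball (0 : ℂ) 1, 0 < (ψ z).re) ∧ ψ 0 = 1

/-- `×n`-circularity of a function on the unit disk. -/
def IsCircular (n : ℕ) (ψ : ℂ → ℂ) : Prop :=
  ∀ z ∈ ball (0 : ℂ) 1,
    ψ (z ^ n) = (n : ℂ)⁻¹ *
      ∑ k ∈ Finset.range n, ψ (Complex.exp (2 * Real.pi * Complex.I * k / n) * z)

/-- Membership in `Cara(𝔻;2,3)`. -/
def Cara23 (ψ : ℂ → ℂ) : Prop := IsCara ψ ∧ IsCircular 2 ψ ∧ IsCircular 3 ψ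

/-- Extreme points of `Cara(𝔻;2,3)`. -/
def ExtremeCara23 (ψ : ℂ → ℂ) : Prop :=
  Cara23 ψ ∧ ∀ (α β : ℂ → ℂ) (t : ℝ), Cara23 α → Cara23 β → 0 < t → t < 1 →
    (∀ z ∈ ball (0 : ℂ) 1, ψ z = t * α z + (1 - t) * β z) →
    Set.EqOn α ψ (ball (0 : ℂ) 1) ∧ Set.EqOn β ψ (ball (0 : ℂ) 1)

/-- A function is rational on the disk. -/
def RationalOnDisk (ψ : ℂ → ℂ) : Prop :=
  ∃ p q : Polynomial ℂ, (∀ z ∈ ball (0 : ℂ) 1, q.eval z ≠ 0) ∧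
    ∀ z ∈ ball (0 : ℂ) 1, ψ z = p.eval z / q.eval z

/-- Uniform convergence on compact subsets of the unit disk. -/
def CompactUniformTendsto (ψs : ℕ → ℂ → ℂ) (ψ : ℂ → ℂ) : Prop :=
  ∀ K : Set ℂ, K ⊆ ball (0 : ℂ) 1 → IsCompact K →
    TendstoUniformlyOn (fun n => ψs n) ψ atTop K

/-- The `ℓ`-th Taylor coefficient at `0` of a function on the disk. -/
def taylorCoef (f : ℂ → ℂ) (ℓ : ℕ) : ℂ :=
  iteratedDeriv ℓ f 0 / (ℓ.factorial : ℂ)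

/-- The `×(2,3)`-orbit of a point of the circle. -/
def orbit23 (ω : Circle) : Set Circle :=
  {ϑ : Circle | ∃ j k : ℕ, ϑ = ω ^ (2 ^ j * 3 ^ k)}


lemma taylorCoef_eq_coeff {ψ : ℂ → ℂ} (hd : DifferentiableOn ℂ ψ (ball 0 1))
    {r : ℝ≥0} (hr0 : 0 < r) (hr1 : (r : ℝ) < 1) (ℓ : ℕ) :
    taylorCoef ψ ℓ = (cauchyPowerSeries ψ 0 r).coeff ℓ := by
  have hp : HasFPowerSeriesOnBall ψ (cauchyPowerSeries ψ 0 r) 0 r :=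
    (hd.mono (closedBall_subset_ball hr1)).hasFPowerSeriesOnBall hr0
  have h := hp.factorial_smul (1 : ℂ) ℓ
  have h' : (ℓ.factorial : ℂ) * (cauchyPowerSeries ψ 0 r).coeff ℓ = iteratedDeriv ℓ ψ 0 := by
    rw [iteratedDeriv_eq_iteratedFDeriv, ← h, nsmul_eq_mul]; rfl
  rw [taylorCoef, ← h', mul_comm, mul_div_assoc, div_self, mul_one]
  exact_mod_cast (Nat.factorial_ne_zero ℓ)

-- mean value
lemma mean_value {F : ℂ → ℂ} {r : ℝ} (hr0 : 0 < r)
    (h : DiffContOnCl ℂ F (ball (0:ℂ) r)) :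
    ∫ θ in (0:ℝ)..(2*Real.pi), F (circleMap 0 r θ) = 2 * Real.pi * F 0 := by
  have := h.circleIntegral_sub_inv_smul (mem_ball_self hr0)
  rw [circleIntegral] at this
  simp only [deriv_circleMap, sub_zero, smul_eq_mul] at this
  have h2 : ∀ θ : ℝ, circleMap 0 r θ * I * ((circleMap 0 r θ)⁻¹ * F (circleMap 0 r θ))
      = I * F (circleMap 0 r θ) := by
    intro θ
    have hne : circleMap 0 r θ ≠ 0 := circleMap_ne_center hr0.ne'
    field_simp
  rw [intervalIntegral.integral_congr (fun θ _ => h2 θ)] at this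
  rw [intervalIntegral.integral_const_mul] at this
  have hI : (I : ℂ) ≠ 0 := I_ne_zero
  have : (∫ θ in (0:ℝ)..(2*Real.pi), F (circleMap 0 r θ)) = 2 * ↑Real.pi * F 0 := by
    have := congrArg (fun z => I⁻¹ * z) this
    simpa [mul_comm, mul_assoc, mul_left_comm, hI] using this
  exact_mod_cast this

lemma coeff_eq_integral (ψ : ℂ → ℂ) {r : ℝ} (hr0 : 0 < r) (ℓ : ℕ) :
    (cauchyPowerSeries ψ 0 r).coeff ℓ
      = (2 * Real.pi : ℂ)⁻¹ *
        ∫ θ in (0:ℝ)..(2*Real.pi), (circleMap 0 r θ) ^ (-(ℓ:ℤ)) * ψ (circleMap 0 r θ) := by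
  have h := cauchyPowerSeries_apply ψ 0 r ℓ 1
  have hcoeff : (cauchyPowerSeries ψ 0 r).coeff ℓ = (cauchyPowerSeries ψ 0 r) ℓ fun _ => 1 := rfl
  rw [hcoeff, h, circleIntegral]
  simp only [deriv_circleMap, sub_zero, smul_eq_mul]
  have h2 : ∀ θ : ℝ, circleMap 0 r θ * I * ((1 / circleMap 0 r θ) ^ ℓ * ((circleMap 0 r θ)⁻¹ * ψ (circleMap 0 r θ)))
      = I * ((circleMap 0 r θ) ^ (-(ℓ:ℤ)) * ψ (circleMap 0 r θ)) := by
    intro θ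
    have hne : circleMap 0 r θ ≠ 0 := circleMap_ne_center hr0.ne'
    rw [zpow_neg, zpow_natCast]
    field_simp
    rw [one_div, inv_pow, mul_right_comm, inv_mul_cancel₀ (pow_ne_zero _ hne), one_mul]
  rw [intervalIntegral.integral_congr (fun θ _ => h2 θ), intervalIntegral.integral_const_mul,
    ← mul_assoc]
  congr 1
  have : (2 * (Real.pi:ℂ) * I)⁻¹ * I = (2 * Real.pi : ℂ)⁻¹ * (I⁻¹ * I) := by
    rw [mul_inv]
    ring
  rw [this, inv_mul_cancel₀ I_ne_zero, mul_one]

lemma cara_coeff_norm_le {ψ : ℂ → ℂ} (h : IsCara ψ) {r : ℝ} (hr0 : 0 < r) (hr1 : r < 1)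
    (ℓ : ℕ) : ‖(cauchyPowerSeries ψ 0 r).coeff ℓ‖ ≤ 2 / r ^ ℓ := by
  obtain ⟨hd, hre, h0⟩ := h
  have hmem : ∀ θ : ℝ, circleMap 0 r θ ∈ ball (0:ℂ) 1 := by
    intro θ
    rw [mem_ball_zero_iff, norm_circleMap_zero, abs_of_pos hr0]
    exact hr1
  have hne : ∀ θ : ℝ, circleMap 0 r θ ≠ 0 := fun θ => circleMap_ne_center hr0.ne'
  have hcont : Continuous fun θ : ℝ => ψ (circleMap 0 r θ) :=
    hd.continuousOn.comp_continuous (continuous_circleMap 0 r) hmem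
  have hzc : Continuous fun θ : ℝ => (circleMap 0 r θ) ^ (-(ℓ:ℤ)) :=
    (continuous_circleMap 0 r).zpow₀ _ (fun θ => Or.inl (hne θ))
  have hdiffcl : ∀ {F : ℂ → ℂ}, DifferentiableOn ℂ F (ball 0 1) →
      DiffContOnCl ℂ F (ball (0:ℂ) r) := fun hF =>
    DifferentiableOn.diffContOnCl (hF.mono
      (closure_ball_subset_closedBall.trans (closedBall_subset_ball hr1)))
  have hmean : ∫ θ in (0:ℝ)..(2*Real.pi), ψ (circleMap 0 r θ) = 2 * Real.pi := by
    rw [mean_value hr0 (hdiffcl hd), h0, mul_one]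
  rcases Nat.eq_zero_or_pos ℓ with rfl | hℓ
  · rw [coeff_eq_integral ψ hr0 0]
    simp only [Nat.cast_zero, neg_zero, zpow_zero, one_mul, pow_zero]
    rw [hmean]
    rw [norm_mul]
    have : ‖((2 * Real.pi : ℝ) : ℂ)‖ = 2 * Real.pi := by
      rw [Complex.norm_real, Real.norm_eq_abs, abs_of_pos Real.two_pi_pos]
    have h2 : ((2 * Real.pi : ℂ)) = ((2 * Real.pi : ℝ) : ℂ) := by push_cast; ring
    rw [h2, norm_inv, this]
    rw [inv_mul_cancel₀ Real.two_pi_pos.ne']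
    norm_num
  -- ℓ ≥ 1
  have hvan : ∫ θ in (0:ℝ)..(2*Real.pi),
      (circleMap 0 r θ) ^ ℓ * ψ (circleMap 0 r θ) = 0 := by
    have hF : DifferentiableOn ℂ (fun z => z ^ ℓ * ψ z) (ball (0:ℂ) 1) :=
      (differentiable_pow ℓ).differentiableOn.mul hd
    have := mean_value hr0 (hdiffcl hF)
    rw [zero_pow hℓ.ne', zero_mul, mul_zero] at this
    exact this
  have hconj : ∫ θ in (0:ℝ)..(2*Real.pi),
      (circleMap 0 r θ) ^ (-(ℓ:ℤ)) * (starRingEnd ℂ) (ψ (circleMap 0 r θ)) = 0 := by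
    have hint : IntervalIntegrable (fun θ : ℝ => (circleMap 0 r θ) ^ ℓ * ψ (circleMap 0 r θ))
        MeasureTheory.volume 0 (2*Real.pi) :=
      (((continuous_circleMap 0 r).pow ℓ).mul hcont).intervalIntegrable _ _
    have hcc := (Complex.conjCLE.toContinuousLinearMap).intervalIntegral_comp_comm hint
    rw [hvan] at hcc
    simp only [ContinuousLinearEquiv.coe_coe, Complex.conjCLE_apply, map_zero] at hcc
    -- hcc : ∫ conj (cθ^ℓ * ψ) = 0
    have hpt : ∀ θ : ℝ, (starRingEnd ℂ) ((circleMap 0 r θ) ^ ℓ * ψ (circleMap 0 r θ))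
        = ((r:ℂ)^2)^ℓ * ((circleMap 0 r θ) ^ (-(ℓ:ℤ)) * (starRingEnd ℂ) (ψ (circleMap 0 r θ))) := by
      intro θ
      rw [map_mul, map_pow]
      have hcθ : (starRingEnd ℂ) (circleMap 0 r θ) = (r:ℂ)^2 * (circleMap 0 r θ)⁻¹ := by
        have := Complex.mul_conj (circleMap 0 r θ)
        rw [Complex.normSq_eq_norm_sq, norm_circleMap_zero, abs_of_pos hr0] at this
        field_simp [hne θ]
        rw [mul_comm] at this
        rw [this]
        push_cast
        ring
      rw [hcθ, mul_pow, zpow_neg, zpow_natCast]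
      ring
    rw [intervalIntegral.integral_congr (fun θ _ => hpt θ),
      intervalIntegral.integral_const_mul] at hcc
    rcases mul_eq_zero.mp hcc with hbad | hgood
    · exact absurd hbad (pow_ne_zero _ (pow_ne_zero _ (by exact_mod_cast hr0.ne')))
    · exact hgood
  -- key identity
  have hint1 : IntervalIntegrable
      (fun θ : ℝ => (circleMap 0 r θ) ^ (-(ℓ:ℤ)) * ψ (circleMap 0 r θ))
      MeasureTheory.volume 0 (2*Real.pi) := (hzc.mul hcont).intervalIntegrable _ _
  have hint2 : IntervalIntegrable
      (fun θ : ℝ => (circleMap 0 r θ) ^ (-(ℓ:ℤ)) * (starRingEnd ℂ) (ψ (circleMap 0 r θ)))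
      MeasureTheory.volume 0 (2*Real.pi) :=
    (hzc.mul (Complex.continuous_conj.comp hcont)).intervalIntegrable _ _
  have hkey : (cauchyPowerSeries ψ 0 r).coeff ℓ = (2 * Real.pi : ℂ)⁻¹ *
      ∫ θ in (0:ℝ)..(2*Real.pi),
        (circleMap 0 r θ) ^ (-(ℓ:ℤ)) * ((2 * (ψ (circleMap 0 r θ)).re : ℝ) : ℂ) := by
    rw [coeff_eq_integral ψ hr0 ℓ]
    congr 1
    have hsum : (∫ θ in (0:ℝ)..(2*Real.pi),
        (circleMap 0 r θ) ^ (-(ℓ:ℤ)) * ((2 * (ψ (circleMap 0 r θ)).re : ℝ) : ℂ))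
        = (∫ θ in (0:ℝ)..(2*Real.pi), (circleMap 0 r θ) ^ (-(ℓ:ℤ)) * ψ (circleMap 0 r θ))
          + ∫ θ in (0:ℝ)..(2*Real.pi),
              (circleMap 0 r θ) ^ (-(ℓ:ℤ)) * (starRingEnd ℂ) (ψ (circleMap 0 r θ)) := by
      rw [← intervalIntegral.integral_add hint1 hint2]
      apply intervalIntegral.integral_congr
      intro θ _
      simp only [← mul_add, Complex.add_conj]
    rw [hsum, hconj, add_zero]
  have hre' : ∀ θ : ℝ, 0 < (ψ (circleMap 0 r θ)).re := fun θ => hre _ (hmem θ)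
  have hnormint : ‖∫ θ in (0:ℝ)..(2*Real.pi),
      (circleMap 0 r θ) ^ (-(ℓ:ℤ)) * ((2 * (ψ (circleMap 0 r θ)).re : ℝ) : ℂ)‖
      ≤ r ^ (-(ℓ:ℤ)) * (2 * (2 * Real.pi)) := by
    refine (intervalIntegral.norm_integral_le_integral_norm Real.two_pi_pos.le).trans ?_
    have hpt : ∀ θ : ℝ, ‖(circleMap 0 r θ) ^ (-(ℓ:ℤ)) * ((2 * (ψ (circleMap 0 r θ)).re : ℝ) : ℂ)‖
        = r ^ (-(ℓ:ℤ)) * (2 * (ψ (circleMap 0 r θ)).re) := by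
      intro θ
      simp only [norm_mul, norm_zpow, norm_circleMap_zero,
        Complex.norm_real, Real.norm_eq_abs]
      rw [abs_of_pos hr0, abs_two, abs_of_pos (hre' θ)]
    rw [intervalIntegral.integral_congr (fun θ _ => hpt θ),
      intervalIntegral.integral_const_mul, intervalIntegral.integral_const_mul]
    have hre_int : ∫ θ in (0:ℝ)..(2*Real.pi), (ψ (circleMap 0 r θ)).re = 2 * Real.pi := by
      have hintc : IntervalIntegrable (fun θ : ℝ => ψ (circleMap 0 r θ))
          MeasureTheory.volume 0 (2*Real.pi) := hcont.intervalIntegrable _ _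
      have hcc := Complex.reCLM.intervalIntegral_comp_comm hintc
      simp only [Complex.reCLM_apply] at hcc
      rw [hcc, hmean]
      simp
    rw [hre_int]
  rw [hkey, norm_mul]
  have hnorm2pi : ‖(2 * (Real.pi:ℂ))⁻¹‖ = (2 * Real.pi)⁻¹ := by
    have h2 : (2 * (Real.pi:ℂ)) = ((2 * Real.pi : ℝ) : ℂ) := by push_cast; ring
    rw [h2, norm_inv, Complex.norm_real, Real.norm_eq_abs, abs_of_pos Real.two_pi_pos]
  rw [hnorm2pi]
  have := mul_le_mul_of_nonneg_left hnormint (inv_nonneg.mpr Real.two_pi_pos.le)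
  refine this.trans (le_of_eq ?_)
  rw [zpow_neg, zpow_natCast]
  have hπ : (2 * Real.pi) ≠ 0 := Real.two_pi_pos.ne'
  have hrℓ : (r:ℝ) ^ ℓ ≠ 0 := pow_ne_zero _ hr0.ne'
  field_simp

lemma cara_hasSum {ψ : ℂ → ℂ} (hd : DifferentiableOn ℂ ψ (ball 0 1))
    {r : ℝ≥0} (hr0 : 0 < r) (hr1 : (r : ℝ) < 1) {z : ℂ} (hz : ‖z‖ < r) :
    HasSum (fun ℓ => taylorCoef ψ ℓ * z ^ ℓ) (ψ z) := by
  have hp : HasFPowerSeriesOnBall ψ (cauchyPowerSeries ψ 0 r) 0 r :=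
    (hd.mono (closedBall_subset_ball hr1)).hasFPowerSeriesOnBall hr0
  have hzmem : z ∈ Metric.eball (0:ℂ) r := by
    rw [Metric.emetric_ball_nnreal]
    exact mem_ball_zero_iff.mpr hz
  have h := hp.hasSum hzmem
  rw [zero_add] at h
  have heq : ∀ ℓ : ℕ, ((cauchyPowerSeries ψ 0 r) ℓ fun _ => z) = taylorCoef ψ ℓ * z ^ ℓ := by
    intro ℓ
    rw [FormalMultilinearSeries.apply_eq_pow_smul_coeff, smul_eq_mul,
      taylorCoef_eq_coeff hd hr0 hr1]
    ring
  simpa [heq] using h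

lemma cara_taylor_norm_le {ψ : ℂ → ℂ} (h : IsCara ψ) {r : ℝ} (hr0 : 0 < r) (hr1 : r < 1)
    (ℓ : ℕ) : ‖taylorCoef ψ ℓ‖ ≤ 2 / r ^ ℓ := by
  set r' : ℝ≥0 := ⟨r, hr0.le⟩ with hr'
  have hco : (r' : ℝ) = r := rfl
  have hr'0 : 0 < r' := by exact_mod_cast hr0
  rw [taylorCoef_eq_coeff h.1 hr'0 (by rw [hco]; exact hr1)]
  have := cara_coeff_norm_le h (r := (r' : ℝ)) (by rw [hco]; exact hr0) (by rw [hco]; exact hr1) ℓ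
  exact this

theorem compactUniform_iff_taylor (ψs : ℕ → ℂ → ℂ) (ψ : ℂ → ℂ)
    (hψs : ∀ n, IsCara (ψs n)) (hψ : IsCara ψ) :
    CompactUniformTendsto ψs ψ ↔
      ∀ ℓ : ℕ, Tendsto (fun n => taylorCoef (ψs n) ℓ) atTop (𝓝 (taylorCoef ψ ℓ)) := by
  constructor
  · intro h ℓ
    have hball : IsOpen (ball (0:ℂ) 1) := isOpen_ball
    have htlu : TendstoLocallyUniformlyOn (fun n => ψs n) ψ atTop (ball (0:ℂ) 1) := by
      rw [tendstoLocallyUniformlyOn_iff_forall_isCompact hball]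
      intro K hK1 hK2
      exact h K hK1 hK2
    have key : ∀ m : ℕ, TendstoLocallyUniformlyOn (fun n => iteratedDeriv m (ψs n))
        (iteratedDeriv m ψ) atTop (ball (0:ℂ) 1) ∧
        (∀ n, DifferentiableOn ℂ (iteratedDeriv m (ψs n)) (ball (0:ℂ) 1)) := by
      intro m
      induction m with
      | zero =>
        simpa [iteratedDeriv_zero] using And.intro htlu (fun n => (hψs n).1)
      | succ m ih =>
        obtain ⟨h1, h2⟩ := ih
        constructor
        · have := h1.deriv (Filter.Eventually.of_forall h2) hball
          simpa [iteratedDeriv_succ, Function.comp_def] using this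
        · intro n
          rw [iteratedDeriv_succ]
          exact (((h2 n).analyticOnNhd hball).deriv).differentiableOn
    have hat := (key ℓ).1.tendsto_at (mem_ball_self one_pos)
    unfold taylorCoef
    exact hat.div_const _
  · intro hc K hK1 hK2
    rcases K.eq_empty_or_nonempty with rfl | hKne
    · exact tendstoUniformlyOn_empty
    obtain ⟨z₀, hz₀K, hz₀⟩ := hK2.exists_isMaxOn hKne continuous_norm.continuousOn
    set s : ℝ := ‖z₀‖ with hsdef
    have hsK : ∀ z ∈ K, ‖z‖ ≤ s := fun z hz => hz₀ hz
    have hs0 : 0 ≤ s := norm_nonneg _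
    have hs1 : s < 1 := mem_ball_zero_iff.mp (hK1 hz₀K)
    obtain ⟨r, hsr, hr1⟩ : ∃ r : ℝ, s < r ∧ r < 1 := ⟨(s + 1) / 2, by linarith, by linarith⟩
    have hr0 : 0 < r := lt_of_le_of_lt hs0 hsr
    obtain ⟨q, hqdef⟩ : ∃ q : ℝ, q = s / r := ⟨_, rfl⟩
    have hq0 : 0 ≤ q := hqdef ▸ div_nonneg hs0 hr0.le
    have hq1 : q < 1 := hqdef ▸ (div_lt_one hr0).mpr hsr
    set r' : ℝ≥0 := ⟨r, hr0.le⟩ with hr'def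
    have hr'co : (r' : ℝ) = r := rfl
    have hr'0 : 0 < r' := by exact_mod_cast hr0
    have hr'1 : (r' : ℝ) < 1 := by rw [hr'co]; exact hr1
    set d : ℕ → ℕ → ℂ := fun n ℓ => taylorCoef (ψs n) ℓ - taylorCoef ψ ℓ with hd_def
    have hbnd : ∀ n ℓ, ‖d n ℓ‖ ≤ 4 / r ^ ℓ := by
      intro n ℓ
      calc ‖d n ℓ‖ ≤ ‖taylorCoef (ψs n) ℓ‖ + ‖taylorCoef ψ ℓ‖ := norm_sub_le _ _
        _ ≤ 2 / r ^ ℓ + 2 / r ^ ℓ :=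
          add_le_add (cara_taylor_norm_le (hψs n) hr0 hr1 ℓ)
            (cara_taylor_norm_le hψ hr0 hr1 ℓ)
        _ = 4 / r ^ ℓ := by ring
    rw [Metric.tendstoUniformlyOn_iff]
    intro ε hε
    have htail : Tendsto (fun N : ℕ => 4 * q ^ N * (1 - q)⁻¹) atTop (𝓝 0) := by
      have h1 := tendsto_pow_atTop_nhds_zero_of_lt_one hq0 hq1
      have := (h1.const_mul 4).mul_const (1 - q)⁻¹
      simpa using this
    obtain ⟨N, hN⟩ := (htail.eventually (gt_mem_nhds (by linarith : (0:ℝ) < ε/2))).exists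
    have key : ∀ n, ∀ z ∈ K, ‖ψs n z - ψ z‖ ≤
        (∑ ℓ ∈ Finset.range N, ‖d n ℓ‖ * s ^ ℓ) + 4 * q ^ N * (1 - q)⁻¹ := by
      intro n z hz
      have hzs : ‖z‖ ≤ s := hsK z hz
      have hzr : ‖z‖ < (r' : ℝ) := by rw [hr'co]; linarith
      have hsum : HasSum (fun ℓ => d n ℓ * z ^ ℓ) (ψs n z - ψ z) := by
        have h1 := cara_hasSum (hψs n).1 hr'0 hr'1 hzr
        have h2 := cara_hasSum hψ.1 hr'0 hr'1 hzr
        have := h1.sub h2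
        simpa [hd_def, sub_mul] using this
      have htermb : ∀ m : ℕ, ‖d n m * z ^ m‖ ≤ 4 * q ^ m := by
        intro m
        rw [norm_mul, norm_pow]
        calc ‖d n m‖ * ‖z‖ ^ m ≤ (4 / r ^ m) * s ^ m := by
              apply mul_le_mul (hbnd n m) (pow_le_pow_left₀ (norm_nonneg z) hzs m)
                (by positivity) (by positivity)
          _ = 4 * q ^ m := by
              rw [hqdef, div_pow, div_mul_eq_mul_div, mul_div_assoc]
      have hsplit : ψs n z - ψ z = (∑ ℓ ∈ Finset.range N, d n ℓ * z ^ ℓ)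
          + ∑' k : ℕ, d n (k + N) * z ^ (k + N) := by
        rw [← hsum.tsum_eq, Summable.sum_add_tsum_nat_add N hsum.summable]
      have htailsum : HasSum (fun k : ℕ => 4 * q ^ (k + N)) (4 * q ^ N * (1 - q)⁻¹) := by
        have hg := hasSum_geometric_of_lt_one hq0 hq1
        have := hg.mul_left (4 * q ^ N)
        have heq : ∀ k : ℕ, 4 * q ^ N * q ^ k = 4 * q ^ (k + N) := by
          intro k
          rw [pow_add]
          ring
        simpa [heq] using this
      have htailnorm : ‖∑' k : ℕ, d n (k + N) * z ^ (k + N)‖ ≤ 4 * q ^ N * (1 - q)⁻¹ :=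
        tsum_of_norm_bounded htailsum (fun k => htermb (k + N))
      rw [hsplit]
      refine (norm_add_le _ _).trans (add_le_add ?_ htailnorm)
      refine (norm_sum_le _ _).trans (Finset.sum_le_sum ?_)
      intro ℓ _
      rw [norm_mul, norm_pow]
      exact mul_le_mul_of_nonneg_left (pow_le_pow_left₀ (norm_nonneg z) hzs ℓ) (norm_nonneg _)
    have hfin : Tendsto (fun n => ∑ ℓ ∈ Finset.range N, ‖d n ℓ‖ * s ^ ℓ) atTop (𝓝 0) := by
      have hterm : ∀ ℓ : ℕ, Tendsto (fun n => ‖d n ℓ‖ * s ^ ℓ) atTop (𝓝 0) := by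
        intro ℓ
        have h1 := ((hc ℓ).sub (tendsto_const_nhds (x := taylorCoef ψ ℓ))).norm
        simp only [sub_self, norm_zero] at h1
        have := h1.mul_const (s ^ ℓ)
        simpa using this
      have := tendsto_finset_sum (Finset.range N) (fun ℓ _ => hterm ℓ)
      simpa using this
    filter_upwards [hfin.eventually (gt_mem_nhds (by linarith : (0:ℝ) < ε/2))] with n hn
    intro z hz
    rw [dist_eq_norm, norm_sub_rev]
    calc ‖ψs n z - ψ z‖ ≤ (∑ ℓ ∈ Finset.range N, ‖d n ℓ‖ * s ^ ℓ) + 4 * q ^ N * (1 - q)⁻¹ :=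
          key n z hz
      _ < ε/2 + ε/2 := add_lt_add hn hN
      _ = ε := by ring


end
end

section
/- Let μ be a finitely supported ergodic ×(2,3)-invariant Borel probability measure on the unit circle 𝕋. Then there exists a root of unity ω ∈ 𝕋 such that μ = (1/|O(ω)|) Σ_{ϑ ∈ O(ω)} δ_ϑ, where O(ω) = {ω^{2^j 3^k} : j, k ∈ ℕ} and δ_ϑ is the Dirac point mass at ϑ. -/
open MeasureTheory Metric Complex Filter Topology
open scoped ENNReal NNReal

noncomputable section

set_option maxHeartbeats 1000000

lemma cont_integrable {f : Circle → ℂ} (hf : Continuous f) (μ : Measure Circle)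
    [IsFiniteMeasure μ] : Integrable f μ := by
  apply hf.integrable_of_hasCompactSupport
  exact IsCompact.of_isClosed_subset isCompact_univ (isClosed_tsupport f) (Set.subset_univ _)

lemma contR_integrable {f : Circle → ℝ} (hf : Continuous f) (μ : Measure Circle)
    [IsFiniteMeasure μ] : Integrable f μ := by
  apply hf.integrable_of_hasCompactSupport
  exact IsCompact.of_isClosed_subset isCompact_univ (isClosed_tsupport f) (Set.subset_univ _)

lemma map_pow_eq (μ : Measure Circle) [IsProbabilityMeasure μ] (n : ℕ)
    (h : MulInvariant n μ) : μ.map (· ^ n) = μ := by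
  have hcont : Continuous (fun x : Circle => x ^ n) := continuous_pow n
  haveI : IsProbabilityMeasure (μ.map (· ^ n)) :=
    Measure.isProbabilityMeasure_map hcont.measurable.aemeasurable
  apply ext_of_forall_lintegral_eq_of_IsFiniteMeasure
  intro f
  rw [lintegral_map f.measurable_coe_ennreal_comp hcont.measurable]
  have hint1 : Integrable (fun x : Circle => ((f (x ^ n) : ℝ))) μ :=
    contR_integrable (by continuity) μ
  have hint2 : Integrable (fun x : Circle => ((f x : ℝ))) μ :=
    contR_integrable (by continuity) μ
  rw [lintegral_coe_eq_integral _ hint1, lintegral_coe_eq_integral _ hint2]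
  congr 1
  have := h ⟨fun x => (RCLike.ofReal (K := ℂ) (f x : ℝ)), by continuity⟩
  simp only [ContinuousMap.coe_mk] at this
  rw [integral_ofReal, integral_ofReal] at this
  exact_mod_cast this

lemma meas_msupport (μ : Measure Circle) [IsProbabilityMeasure μ] :
    μ (msupport μ) = 1 := by
  have hclosed : IsClosed (msupport μ) := isClosed_sInter (fun s hs => hs.1)
  rw [← prob_compl_eq_zero_iff hclosed.measurableSet]
  have hcompl : (msupport μ)ᶜ = ⋃₀ (compl '' {s : Set Circle | IsClosed s ∧ μ s = 1}) := by
    simp [msupport, Set.compl_sInter, Set.sUnion_image]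
  rw [hcompl]
  obtain ⟨T, hTc, hTsub, hTU⟩ := TopologicalSpace.isOpen_sUnion_countable
    (compl '' {s : Set Circle | IsClosed s ∧ μ s = 1})
    (by rintro t ⟨s, ⟨hs1, hs2⟩, rfl⟩; exact hs1.isOpen_compl)
  rw [← hTU]
  refine (measure_sUnion_null_iff hTc).2 ?_
  intro t ht
  obtain ⟨s, ⟨hs1, hs2⟩, rfl⟩ := hTsub ht
  rw [prob_compl_eq_zero_iff hs1.measurableSet]
  exact hs2

lemma finset_meas (μ : Measure Circle) (s : Finset Circle) :
    μ ↑s = ∑ x ∈ s, μ {x} := by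
  have h1 : (↑s : Set Circle) = ⋃ x ∈ s, {x} := by ext; simp
  rw [h1, measure_biUnion_finset ?_ (fun b _ => measurableSet_singleton b)]
  intro x _ y _ hxy
  simp [Function.onFun, hxy]

lemma mass_le_pow (μ : Measure Circle) {n : ℕ} (hmap : μ.map (· ^ n) = μ) (x : Circle) :
    μ {x} ≤ μ {x ^ n} := by
  conv_rhs => rw [← hmap]
  rw [Measure.map_apply (continuous_pow n).measurable (measurableSet_singleton _)]
  exact measure_mono (by simp)

lemma mass_pair_le_pow (μ : Measure Circle) {n : ℕ} (hmap : μ.map (· ^ n) = μ) {x y : Circle}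
    (hxy : x ≠ y) (hpow : x ^ n = y ^ n) : μ {x} + μ {y} ≤ μ {x ^ n} := by
  conv_rhs => rw [← hmap]
  rw [Measure.map_apply (continuous_pow n).measurable (measurableSet_singleton _)]
  have hsub : ({x} ∪ {y} : Set Circle) ⊆ (· ^ n) ⁻¹' {x ^ n} := by
    intro z hz
    rcases hz with hz | hz <;> simp_all
  calc μ {x} + μ {y} = μ ({x} ∪ {y}) :=
        (measure_union (Set.disjoint_singleton.mpr hxy) (measurableSet_singleton y)).symm
    _ ≤ _ := measure_mono hsub

lemma exists_order {ω : Circle} (h : (orbit23 ω).Finite) : ∃ d : ℕ, 0 < d ∧ ω ^ d = 1 := by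
  have key : ∀ a b : ℕ, a < b → ω ^ 2 ^ a = ω ^ 2 ^ b → ∃ d : ℕ, 0 < d ∧ ω ^ d = 1 := by
    intro a b hab heq
    have h2 : (2 : ℕ) ^ a < 2 ^ b := Nat.pow_lt_pow_right one_lt_two hab
    refine ⟨2 ^ b - 2 ^ a, Nat.sub_pos_of_lt h2, ?_⟩
    have hm : ω ^ 2 ^ a * ω ^ (2 ^ b - 2 ^ a) = ω ^ 2 ^ a * 1 := by
      rw [mul_one, ← pow_add, Nat.add_sub_cancel' h2.le, heq]
    exact mul_left_cancel hm
  have hmt : Set.MapsTo (fun j : ℕ => ω ^ 2 ^ j) Set.univ (orbit23 ω) :=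
    fun j _ => ⟨j, 0, by simp⟩
  obtain ⟨a, -, b, -, hab, heq⟩ := Set.infinite_univ.exists_ne_map_eq_of_mapsTo hmt h
  rcases hab.lt_or_gt with h' | h'
  · exact key a b h' heq
  · exact key b a h' heq.symm

theorem ergodic_finite_eq_uniform_orbit (μ : Measure Circle) (hμ : Ergodic23 μ)
    (hfin : (msupport μ).Finite) :
    ∃ ω : Circle, (∃ d : ℕ, 0 < d ∧ ω ^ d = 1) ∧
      ∃ hofin : (orbit23 ω).Finite,
        μ = (hofin.toFinset.card : ℝ≥0∞)⁻¹ • ∑ ϑ ∈ hofin.toFinset, Measure.dirac ϑ := by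
  classical
  obtain ⟨⟨hprob, hμ2, hμ3⟩, herg⟩ := hμ
  haveI := hprob
  have hmap2 : μ.map (· ^ 2) = μ := map_pow_eq μ 2 hμ2
  have hmap3 : μ.map (· ^ 3) = μ := map_pow_eq μ 3 hμ3
  -- atoms
  have hAsub : {x : Circle | μ {x} ≠ 0} ⊆ msupport μ := by
    intro x hx s hs
    by_contra hxs
    exact hx (le_antisymm (le_trans (measure_mono (Set.singleton_subset_iff.2 hxs))
      ((prob_compl_eq_zero_iff hs.1.measurableSet).2 hs.2).le) zero_le)
  have hAfin : {x : Circle | μ {x} ≠ 0}.Finite := hfin.subset hAsub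
  have hex : ∃ x, μ {x} ≠ 0 := by
    by_contra hno
    push_neg at hno
    have h1 : μ (msupport μ) = 1 := meas_msupport μ
    have h0 : μ (msupport μ) = 0 := by
      rw [← hfin.coe_toFinset, finset_meas]
      simp [hno]
    simp [h0] at h1
  obtain ⟨ω, hωA, hωmax'⟩ : ∃ ω ∈ hAfin.toFinset, ∀ x ∈ hAfin.toFinset, μ {x} ≤ μ {ω} := by
    apply Finset.exists_max_image
    obtain ⟨x, hx⟩ := hex
    exact ⟨x, by simpa using hx⟩
  set c := μ {ω} with hc_def
  have hc : 0 < c := by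
    rw [Set.Finite.mem_toFinset] at hωA
    exact pos_iff_ne_zero.2 hωA
  have hctop : c ≠ ∞ := (prob_le_one.trans_lt ENNReal.one_lt_top).ne
  have hcmax : ∀ x : Circle, μ {x} ≤ c := by
    intro x
    by_cases hx : μ {x} = 0
    · simp [hx]
    · exact hωmax' x (by simpa using hx)
  -- orbit masses
  have hstep2 : ∀ y : Circle, μ {y} ≤ μ {y ^ 2} := mass_le_pow μ hmap2
  have hstep3 : ∀ y : Circle, μ {y} ≤ μ {y ^ 3} := mass_le_pow μ hmap3
  have hkey3 : ∀ k : ℕ, c ≤ μ {ω ^ 3 ^ k} := by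
    intro k
    induction k with
    | zero => simp [hc_def]
    | succ k ih =>
      have he : ω ^ 3 ^ (k + 1) = (ω ^ 3 ^ k) ^ 3 := by rw [← pow_mul, pow_succ]
      rw [he]
      exact ih.trans (hstep3 _)
  have hkey : ∀ j k : ℕ, μ {ω ^ (2 ^ j * 3 ^ k)} = c := by
    intro j k
    refine le_antisymm (hcmax _) ?_
    induction j with
    | zero => simpa using hkey3 k
    | succ j ih =>
      have he : ω ^ (2 ^ (j + 1) * 3 ^ k) = (ω ^ (2 ^ j * 3 ^ k)) ^ 2 := by
        rw [← pow_mul]; congr 1; ring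
      rw [he]
      exact ih.trans (hstep2 _)
  have horb : ∀ x ∈ orbit23 ω, μ {x} = c := by
    rintro x ⟨j, k, rfl⟩
    exact hkey j k
  have hofin : (orbit23 ω).Finite := hAfin.subset (fun x hx => by
    rw [Set.mem_setOf_eq, horb x hx]; exact hc.ne')
  set F := hofin.toFinset with hF_def
  have hmemF : ∀ x, x ∈ F ↔ x ∈ orbit23 ω := fun x => Set.Finite.mem_toFinset hofin
  have hωF : ω ∈ F := (hmemF ω).2 ⟨0, 0, by simp⟩
  have hFcard : (F.card : ℝ≥0∞) ≠ 0 := by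
    simpa using Finset.card_ne_zero_of_mem hωF
  have hFtop : (F.card : ℝ≥0∞) ≠ ∞ := ENNReal.natCast_ne_top _
  -- orbit closed under squaring and cubing, injectively
  have hsub : ∀ n, (n = 2 ∨ n = 3) → ∀ x ∈ F, x ^ n ∈ F := by
    rintro n hn x hx
    rw [hmemF] at hx ⊢
    obtain ⟨j, k, rfl⟩ := hx
    rcases hn with rfl | rfl
    · exact ⟨j + 1, k, by rw [← pow_mul]; congr 1; ring⟩
    · exact ⟨j, k + 1, by rw [← pow_mul]; congr 1; ring⟩
  have hinj : ∀ n, (n = 2 ∨ n = 3) → ∀ x ∈ F, ∀ y ∈ F, x ^ n = y ^ n → x = y := by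
    intro n hn x hx y hy hexy
    by_contra hne
    have hmapn : μ.map (· ^ n) = μ := by rcases hn with rfl | rfl
                                         exacts [hmap2, hmap3]
    have h1 : μ {x} + μ {y} ≤ μ {x ^ n} := mass_pair_le_pow μ hmapn hne hexy
    rw [horb x ((hmemF x).1 hx), horb y ((hmemF y).1 hy)] at h1
    have h2 : c + c ≤ c := h1.trans (hcmax _)
    exact absurd h2 (ENNReal.lt_add_right hctop hc.ne').not_ge
  have himg : ∀ n, (n = 2 ∨ n = 3) → F.image (· ^ n) = F := by
    intro n hn
    apply Finset.eq_of_subset_of_card_le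
    · intro y hy
      obtain ⟨x, hx, rfl⟩ := Finset.mem_image.1 hy
      exact hsub n hn x hx
    · rw [Finset.card_image_of_injOn (fun x hx y hy => hinj n hn x hx y hy)]
  have hsum_pow : ∀ n, (n = 2 ∨ n = 3) → ∀ g : Circle → ℂ,
      ∑ x ∈ F, g (x ^ n) = ∑ x ∈ F, g x := by
    intro n hn g
    conv_rhs => rw [← himg n hn]
    rw [Finset.sum_image (fun x hx y hy => hinj n hn x hx y hy)]
  -- the uniform measure κ on the orbit
  set κ : Measure Circle := (F.card : ℝ≥0∞)⁻¹ • ∑ x ∈ F, Measure.dirac x with hκ_def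
  have hκint : ∀ g : Circle → ℂ, Continuous g →
      ∫ x, g x ∂κ = ((F.card : ℝ≥0∞)⁻¹).toReal • ∑ x ∈ F, g x := by
    intro g hg
    rw [hκ_def, integral_smul_measure,
      integral_finset_sum_measure (fun i _ => cont_integrable hg _)]
    congr 1
    exact Finset.sum_congr rfl (fun x _ => integral_dirac g x)
  have hκuniv : κ Set.univ = 1 := by
    rw [hκ_def, Measure.smul_apply, Measure.finset_sum_apply]
    simp only [measure_univ, Finset.sum_const, nsmul_eq_mul, mul_one, smul_eq_mul]
    exact ENNReal.inv_mul_cancel hFcard hFtop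
  have hκprob : IsProbabilityMeasure κ := ⟨hκuniv⟩
  have hκinv : ∀ n, (n = 2 ∨ n = 3) → MulInvariant n κ := by
    intro n hn f
    rw [hκint (fun x => f (x ^ n)) (f.continuous.comp (continuous_pow n)),
      hκint (fun x => f x) f.continuous, hsum_pow n hn (fun x => f x)]
  -- restriction of μ to the orbit
  have hO : MeasurableSet (orbit23 ω) := hofin.measurableSet
  have hrestr : μ.restrict (orbit23 ω) = c • ∑ x ∈ F, Measure.dirac x := by
    ext S hS
    rw [Measure.restrict_apply hS, Measure.smul_apply, Measure.finset_sum_apply, smul_eq_mul]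
    have hSO : S ∩ orbit23 ω = ↑(F.filter (· ∈ S)) := by
      ext z
      simp only [Set.mem_inter_iff, Finset.coe_filter, Set.mem_setOf_eq, hmemF]
      tauto
    rw [hSO, finset_meas, Finset.sum_filter, Finset.mul_sum]
    refine Finset.sum_congr rfl (fun x hx => ?_)
    rw [Measure.dirac_apply' x hS, Set.indicator_apply]
    split_ifs with h
    · simp [horb x ((hmemF x).1 hx)]
    · simp
  set t := μ (orbit23 ω) with ht_def
  have htc : t = c * F.card := by
    rw [ht_def, ← hofin.coe_toFinset, finset_meas,
      Finset.sum_congr rfl (fun x hx => horb x ((hmemF x).1 hx))]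
    simp [Finset.sum_const, mul_comm]
  have ht1 : t ≤ 1 := prob_le_one
  have htpos : 0 < t := by
    rw [htc]
    exact ENNReal.mul_pos hc.ne' hFcard
  rcases eq_or_lt_of_le ht1 with hteq | htlt
  · -- t = 1 : conclusion
    have h1 : c * (F.card : ℝ≥0∞) = 1 := htc.symm.trans hteq
    have hc_eq : c = (F.card : ℝ≥0∞)⁻¹ := by
      calc c = c * ((F.card : ℝ≥0∞) * (F.card : ℝ≥0∞)⁻¹) := by
              rw [ENNReal.mul_inv_cancel hFcard hFtop, mul_one]
        _ = (c * F.card) * (F.card : ℝ≥0∞)⁻¹ := by ring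
        _ = (F.card : ℝ≥0∞)⁻¹ := by rw [h1, one_mul]
    refine ⟨ω, exists_order hofin, hofin, ?_⟩
    have hcompl0 : μ (orbit23 ω)ᶜ = 0 := (prob_compl_eq_zero_iff hO).2 hteq
    calc μ = μ.restrict (orbit23 ω) + μ.restrict (orbit23 ω)ᶜ :=
          (Measure.restrict_add_restrict_compl hO).symm
      _ = μ.restrict (orbit23 ω) := by
          rw [Measure.restrict_eq_zero.2 hcompl0, add_zero]
      _ = c • ∑ x ∈ F, Measure.dirac x := hrestr
      _ = ((F.card : ℝ≥0∞))⁻¹ • ∑ x ∈ F, Measure.dirac x := by rw [hc_eq]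
  · -- t < 1 : contradiction with ergodicity
    exfalso
    set ν : Measure Circle := (1 - t)⁻¹ • μ.restrict (orbit23 ω)ᶜ with hν_def
    have h1t0 : (1 : ℝ≥0∞) - t ≠ 0 := by
      rw [Ne, tsub_eq_zero_iff_le]
      exact htlt.not_ge
    have h1ttop : (1 : ℝ≥0∞) - t ≠ ∞ := (tsub_le_self.trans_lt ENNReal.one_lt_top).ne
    have hOc : μ (orbit23 ω)ᶜ = 1 - t := by
      rw [measure_compl hO (measure_ne_top μ _), measure_univ]
    have hνprob : IsProbabilityMeasure ν := ⟨by
      rw [hν_def, Measure.smul_apply, Measure.restrict_apply MeasurableSet.univ,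
        Set.univ_inter, hOc, smul_eq_mul, ENNReal.inv_mul_cancel h1t0 h1ttop]⟩
    have hdec : μ = t • κ + (1 - t) • ν := by
      have e1 : t • κ = μ.restrict (orbit23 ω) := by
        rw [hκ_def, smul_smul, htc, mul_assoc, ENNReal.mul_inv_cancel hFcard hFtop,
          mul_one, ← hrestr]
      have e2 : (1 - t) • ν = μ.restrict (orbit23 ω)ᶜ := by
        rw [hν_def, smul_smul, ENNReal.mul_inv_cancel h1t0 h1ttop, one_smul]
      rw [e1, e2, Measure.restrict_add_restrict_compl hO]
    have hνinv : ∀ n, (n = 2 ∨ n = 3) → MulInvariant n ν := by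
      intro n hn f
      have hmulμ : MulInvariant n μ := by rcases hn with rfl | rfl
                                          exacts [hμ2, hμ3]
      have hcont : Continuous fun x : Circle => f (x ^ n) :=
        f.continuous.comp (continuous_pow n)
      have hint : ∀ g : Circle → ℂ, Continuous g →
          ∫ x, g x ∂(μ.restrict (orbit23 ω)ᶜ) =
            ∫ x, g x ∂μ - ∫ x, g x ∂(μ.restrict (orbit23 ω)) := by
        intro g hg
        have hadd := integral_add_measure (μ := μ.restrict (orbit23 ω))
          (ν := μ.restrict (orbit23 ω)ᶜ) (cont_integrable hg _) (cont_integrable hg _)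
        rw [Measure.restrict_add_restrict_compl hO] at hadd
        rw [hadd]
        ring
      have hrO : ∫ x, f (x ^ n) ∂(μ.restrict (orbit23 ω)) =
          ∫ x, f x ∂(μ.restrict (orbit23 ω)) := by
        rw [hrestr, integral_smul_measure, integral_smul_measure,
          integral_finset_sum_measure (fun i _ => cont_integrable hcont _),
          integral_finset_sum_measure (fun i _ => cont_integrable f.continuous _)]
        congr 1
        rw [Finset.sum_congr rfl (fun x _ => integral_dirac _ x),
          Finset.sum_congr rfl (fun x _ => integral_dirac (fun y => f y) x)]
        exact hsum_pow n hn (fun y => f y)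
      rw [hν_def, integral_smul_measure, integral_smul_measure, hint _ hcont,
        hint _ f.continuous, hmulμ f, hrO]
    obtain ⟨hκμ, -⟩ := herg κ ν t ⟨hκprob, hκinv 2 (Or.inl rfl), hκinv 3 (Or.inr rfl)⟩
      ⟨hνprob, hνinv 2 (Or.inl rfl), hνinv 3 (Or.inr rfl)⟩ htpos htlt hdec
    have hκO : κ (orbit23 ω) = 1 := by
      rw [hκ_def, Measure.smul_apply, Measure.finset_sum_apply,
        Finset.sum_congr rfl (fun x hx => Measure.dirac_apply_of_mem ((hmemF x).1 hx))]
      simp only [Finset.sum_const, nsmul_eq_mul, mul_one, smul_eq_mul]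
      exact ENNReal.inv_mul_cancel hFcard hFtop
    rw [hκμ, ← ht_def] at hκO
    exact htlt.ne hκO

end
end
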